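/- Let H be a complex Hilbert space, S a pure bounded isometry on H, and W = (range S)ᗮ its wandering subspace. Let N be a closed subspace of H invariant under S* (i.e., S*(N) ⊆ N), let P_N be the orthogonal projection onto N, and let A_N = P_N ∘ S restricted to N (the compression of S to N). If (g_i)_{i∈I} is a family of vectors of W with A‖f‖² ≤ ∑_{i∈I} |⟨f, g_i⟩|² ≤ B‖f‖² for all f ∈ W (for constants A, B > 0), then {A_Nⁿ (P_N g_i) : i ∈ I, n ≥ 0} is a frame of N with bounds A, B, i.e., A‖f‖² ≤ ∑_{i∈I, n≥0} |⟨f, A_Nⁿ P_N g_i⟩|² ≤ B‖f‖² for all f ∈ N. -/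

import Mathlib

open scoped ComplexInnerProductSpace
open ContinuousLinearMap Filter

set_option linter.unusedSectionVars false

section Aux

variable {H : Type*} [NormedAddCommGroup H] [InnerProductSpace ℂ H] [CompleteSpace H]

private lemma pow_apply' (S : H →L[ℂ] H) (n : ℕ) (x : H) :
    (S ^ (n + 1)) x = (S ^ n) (S x) := by
  rw [pow_succ, ContinuousLinearMap.mul_apply]

private lemma pow_apply'' (S : H →L[ℂ] H) (n : ℕ) (x : H) :
    (S ^ (n + 1)) x = S ((S ^ n) x) := by
  rw [pow_succ', ContinuousLinearMap.mul_apply]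

private lemma pow_norm (S : H →L[ℂ] H) (hiso : ∀ x : H, ‖S x‖ = ‖x‖) (n : ℕ) (x : H) :
    ‖(S ^ n) x‖ = ‖x‖ := by
  induction n generalizing x with
  | zero => simp
  | succ n ih => rw [pow_apply', ih, hiso]

private lemma pow_inner (S : H →L[ℂ] H) (hiso : ∀ x : H, ‖S x‖ = ‖x‖) (n : ℕ) (x y : H) :
    ⟪(S ^ n) x, (S ^ n) y⟫ = ⟪x, y⟫ :=
  LinearIsometry.inner_map_map ⟨(S ^ n).toLinearMap, pow_norm S hiso n⟩ x y

private lemma inner_S (S : H →L[ℂ] H) (hiso : ∀ x : H, ‖S x‖ = ‖x‖) (x y : H) :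
    ⟪S x, S y⟫ = ⟪x, y⟫ :=
  LinearIsometry.inner_map_map ⟨S.toLinearMap, hiso⟩ x y

private lemma adj_pow_inner (S : H →L[ℂ] H) (n : ℕ) (x y : H) :
    ⟪(S ^ n) x, y⟫ = ⟪x, ((adjoint S) ^ n) y⟫ := by
  induction n generalizing x y with
  | zero => simp
  | succ n ih =>
    rw [pow_apply' S n, pow_apply'' (adjoint S) n, ih, adjoint_inner_right]

private lemma inner_adj (S : H →L[ℂ] H) (x y : H) : ⟪x, S y⟫ = ⟪adjoint S x, y⟫ :=
  (adjoint_inner_left S y x).symm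

/-- Pythagoras for the wandering decomposition. -/
private lemma norm_sq_decomp (S : H →L[ℂ] H) (hiso : ∀ x : H, ‖S x‖ = ‖x‖) (x : H) :
    ‖x‖ ^ 2 = ‖x - S (adjoint S x)‖ ^ 2 + ‖adjoint S x‖ ^ 2 := by
  have horth : ⟪x - S (adjoint S x), S (adjoint S x)⟫ = 0 := by
    rw [inner_sub_left, inner_S S hiso, ← adjoint_inner_left, sub_self]
  have h := norm_add_sq_eq_norm_sq_add_norm_sq_of_inner_eq_zero _ _ horth
  rw [sub_add_cancel, hiso] at h
  nlinarith [h]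

private lemma adjoint_pow_norm_tendsto_zero (S : H →L[ℂ] H)
    (hiso : ∀ x : H, ‖S x‖ = ‖x‖)
    (hpure : (⋂ n : ℕ, Set.range (S ^ n)) = ({0} : Set H)) (f : H) :
    Tendsto (fun n : ℕ => ‖((adjoint S) ^ n) f‖ ^ 2) atTop (nhds 0) := by
  set D := adjoint S with hD
  set u : ℕ → H := fun n => (D ^ n) f with hu
  set q : ℕ → H := fun n => (S ^ n) (u n) with hq
  have hqn : ∀ n, ‖q n‖ = ‖u n‖ := fun n => pow_norm S hiso n _
  -- ⟪q m, q n⟫ = ‖u m‖ ^ 2 for n ≤ m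
  have hkey : ∀ {n m : ℕ}, n ≤ m → ⟪q m, q n⟫ = ((‖u m‖ : ℂ)) ^ 2 := by
    intro n m hnm
    obtain ⟨k, rfl⟩ := Nat.exists_eq_add_of_le hnm
    have h1 : q (n + k) = (S ^ n) ((S ^ k) (u (n + k))) := by
      simp only [hq, ← ContinuousLinearMap.comp_apply, ← mul_def, ← pow_add]
    have h2 : ⟪q (n + k), q n⟫ = ⟪(S ^ k) (u (n + k)), u n⟫ := by
      rw [h1]; exact pow_inner S hiso n _ _
    have h3 : ⟪(S ^ k) (u (n + k)), u n⟫ = ⟪u (n + k), (D ^ k) (u n)⟫ :=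
      adj_pow_inner S k _ _
    have h4 : (D ^ k) (u n) = u (n + k) := by
      simp only [hu, ← ContinuousLinearMap.comp_apply, ← mul_def, ← pow_add, add_comm n k]
    rw [h2, h3, h4, inner_self_eq_norm_sq_to_K]; norm_cast
  have hdist : ∀ {n m : ℕ}, n ≤ m →
      ‖q n - q m‖ ^ 2 = ‖u n‖ ^ 2 - ‖u m‖ ^ 2 := by
    intro n m hnm
    have e1 : ⟪q m, q n⟫ = ((‖u m‖ : ℂ)) ^ 2 := hkey hnm
    have e2 : ⟪q n, q m⟫ = ((‖u m‖ : ℂ)) ^ 2 := by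
      rw [← inner_conj_symm, e1]; simp
    have := norm_sub_sq (𝕜 := ℂ) (q n) (q m)
    rw [e2] at this
    rw [this, hqn, hqn]
    have h5 : RCLike.re ((‖u m‖ : ℂ) ^ 2) = ‖u m‖ ^ 2 := by
      norm_cast
    rw [h5]; ring
  have hmono : ∀ {n m : ℕ}, n ≤ m → ‖u m‖ ^ 2 ≤ ‖u n‖ ^ 2 := by
    intro n m h
    nlinarith [hdist h, sq_nonneg ‖q n - q m‖]
  have hanti : Antitone fun n => ‖u n‖ ^ 2 := fun n m h => hmono h
  have hbdd : BddBelow (Set.range fun n => ‖u n‖ ^ 2) :=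
    ⟨0, by rintro x ⟨n, rfl⟩; positivity⟩
  have hL : Tendsto (fun n => ‖u n‖ ^ 2) atTop (nhds (⨅ n, ‖u n‖ ^ 2)) :=
    tendsto_atTop_ciInf hanti hbdd
  have hcs : CauchySeq fun n => ‖u n‖ ^ 2 := hL.cauchySeq
  have hcq : CauchySeq q := by
    rw [Metric.cauchySeq_iff'] at hcs ⊢
    intro ε hε
    obtain ⟨N, hN⟩ := hcs (ε ^ 2) (by positivity)
    refine ⟨N, fun n hn => ?_⟩
    have h1 := hdist hn
    have h2 := hN n hn
    rw [Real.dist_eq] at h2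
    have h3 : ‖q N - q n‖ ^ 2 < ε ^ 2 := by
      rw [h1]
      calc ‖u N‖ ^ 2 - ‖u n‖ ^ 2 ≤ |‖u n‖ ^ 2 - ‖u N‖ ^ 2| := by
            rw [abs_sub_comm]; exact le_abs_self _
        _ < ε ^ 2 := h2
    rw [dist_eq_norm, norm_sub_rev]
    nlinarith [norm_nonneg (q N - q n)]
  obtain ⟨y, hy⟩ := cauchySeq_tendsto_of_complete hcq
  have hy0 : y = 0 := by
    have hmem : ∀ n : ℕ, y ∈ Set.range (S ^ n) := by
      intro n
      have hcl : IsClosed (Set.range (S ^ n)) := by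
        have hisom : Isometry (S ^ n) :=
          AddMonoidHomClass.isometry_of_norm _ (pow_norm S hiso n)
        exact hisom.isClosedEmbedding.isClosed_range
      refine hcl.mem_of_tendsto hy (eventually_atTop.2 ⟨n, fun m hm => ?_⟩)
      obtain ⟨k, rfl⟩ := Nat.exists_eq_add_of_le hm
      exact ⟨(S ^ k) (u (n + k)), by simp only [hq, ← ContinuousLinearMap.mul_apply, ← pow_add]⟩
    have h := Set.mem_iInter.2 hmem
    rwa [hpure] at h
  have hfin : Tendsto (fun n => ‖q n‖ ^ 2) atTop (nhds 0) := by
    have h := (hy.norm).pow 2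
    rw [hy0] at h
    simpa using h
  simpa only [hqn] using hfin

private lemma hasSum_wandering (S : H →L[ℂ] H)
    (hiso : ∀ x : H, ‖S x‖ = ‖x‖)
    (hpure : (⋂ n : ℕ, Set.range (S ^ n)) = ({0} : Set H)) (f : H) :
    HasSum (fun n : ℕ =>
        ‖((adjoint S) ^ n) f - S (adjoint S (((adjoint S) ^ n) f))‖ ^ 2)
      (‖f‖ ^ 2) := by
  set D := adjoint S with hD
  set u : ℕ → H := fun n => (D ^ n) f with hu
  have hterm : ∀ n, ‖u n - S (D (u n))‖ ^ 2 = ‖u n‖ ^ 2 - ‖u (n + 1)‖ ^ 2 := by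
    intro n
    have h1 := norm_sq_decomp S hiso (u n)
    have h2 : u (n + 1) = D (u n) := pow_apply'' D n f
    rw [h2]; linarith
  rw [hasSum_iff_tendsto_nat_of_nonneg (fun n => by positivity)]
  have hps : ∀ N : ℕ, ∑ n ∈ Finset.range N, ‖u n - S (D (u n))‖ ^ 2
      = ‖u 0‖ ^ 2 - ‖u N‖ ^ 2 := by
    intro N
    simp_rw [hterm]
    exact Finset.sum_range_sub' (fun n => ‖u n‖ ^ 2) N
  simp only [hu] at hps
  simp only [hps]
  have h0 : ‖u 0‖ = ‖f‖ := by simp [hu]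
  have ht := Tendsto.sub (tendsto_const_nhds (x := ‖f‖ ^ 2))
    (adjoint_pow_norm_tendsto_zero S hiso hpure f)
  simpa [h0] using ht

end Aux

set_option maxHeartbeats 1000000 in
theorem frame_of_iterations_compression
    (H : Type*) [NormedAddCommGroup H] [InnerProductSpace ℂ H] [CompleteSpace H]
    (S : H →L[ℂ] H) (hiso : ∀ x : H, ‖S x‖ = ‖x‖)
    (hpure : (⋂ n : ℕ, Set.range (S ^ n)) = ({0} : Set H))
    (N : Submodule ℂ H) [CompleteSpace N]
    (hNinv : ∀ x ∈ N, ContinuousLinearMap.adjoint S x ∈ N)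
    {ι : Type*} (g : ι → H)
    (hg : ∀ i, g i ∈ (LinearMap.range (S : H →ₗ[ℂ] H))ᗮ)
    (A B : ℝ) (hA : 0 < A) (hB : 0 < B)
    (hframe : ∀ f ∈ (LinearMap.range (S : H →ₗ[ℂ] H))ᗮ,
      A * ‖f‖ ^ 2 ≤ ∑' i : ι, ‖⟪f, g i⟫‖ ^ 2 ∧
      ∑' i : ι, ‖⟪f, g i⟫‖ ^ 2 ≤ B * ‖f‖ ^ 2) :
    ∀ f : N,
      A * ‖f‖ ^ 2 ≤
        ∑' p : ι × ℕ,
          ‖⟪f, (((N.orthogonalProjectionOnto) ∘L (S ∘L N.subtypeL)) ^ p.2)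
              ((N.orthogonalProjectionOnto) (g p.1))⟫‖ ^ 2 ∧
      ∑' p : ι × ℕ,
          ‖⟪f, (((N.orthogonalProjectionOnto) ∘L (S ∘L N.subtypeL)) ^ p.2)
              ((N.orthogonalProjectionOnto) (g p.1))⟫‖ ^ 2 ≤ B * ‖f‖ ^ 2 := by
  intro f
  set D := ContinuousLinearMap.adjoint S with hD
  set T : N →L[ℂ] N := (N.orthogonalProjectionOnto) ∘L (S ∘L N.subtypeL) with hT
  set P := N.orthogonalProjectionOnto with hP
  -- the compression's adjoint is the restriction of S* to N
  let φ : N → N := fun z => ⟨D (z : H), hNinv _ z.2⟩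
  have hφcoe : ∀ (n : ℕ) (z : N), ((φ^[n] z : N) : H) = (D ^ n) (z : H) := by
    intro n
    induction n with
    | zero => intro z; simp
    | succ n ih =>
      intro z
      rw [Function.iterate_succ_apply, ih, pow_apply' D]
  have hbase : ∀ (z : N) (x : H), ⟪z, P x⟫ = ⟪(z : H), x⟫ := by
    intro z x
    exact Submodule.inner_orthogonalProjectionOnto_eq_of_mem_left (K := N) z x
  have hstep : ∀ z y : N, ⟪z, T y⟫ = ⟪φ z, y⟫ := by
    intro z y
    have h1 : T y = P (S (y : H)) := rfl
    rw [h1, hbase, inner_adj S]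
    exact (Submodule.coe_inner N (φ z) y).symm
  have hiter : ∀ (n : ℕ) (z y : N), ⟪z, (T ^ n) y⟫ = ⟪φ^[n] z, y⟫ := by
    intro n
    induction n with
    | zero => intro z y; simp
    | succ n ih =>
      intro z y
      rw [pow_apply' T n, ih, hstep, Function.iterate_succ_apply']
  have hmain : ∀ (n : ℕ) (i : ι), ⟪f, (T ^ n) (P (g i))⟫ = ⟪(D ^ n) (f : H), g i⟫ := by
    intro n i
    rw [hiter n f (P (g i)), hbase, hφcoe]
  set u : ℕ → H := fun n => (D ^ n) (f : H) with hu
  set w : ℕ → H := fun n => u n - S (D (u n)) with hw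
  have hw_mem : ∀ n, w n ∈ (LinearMap.range (S : H →ₗ[ℂ] H))ᗮ := by
    intro n
    rw [Submodule.mem_orthogonal]
    rintro x ⟨y, rfl⟩
    show ⟪S y, u n - S (D (u n))⟫ = 0
    rw [inner_sub_right, inner_S S hiso]
    rw [show (⟪S y, u n⟫ : ℂ) = ⟪y, D (u n)⟫ from (adjoint_inner_right S y (u n)).symm]
    exact sub_self _
  have hinner_w : ∀ (n : ℕ) (i : ι), ⟪u n, g i⟫ = ⟪w n, g i⟫ := by
    intro n i
    have hz : (⟪S (D (u n)), g i⟫ : ℂ) = 0 :=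
      (Submodule.mem_orthogonal _ _).1 (hg i) _ ⟨D (u n), rfl⟩
    have : w n = u n - S (D (u n)) := rfl
    rw [this, inner_sub_left, hz, sub_zero]
  -- frame estimates for each level
  have hfr : ∀ n, A * ‖w n‖ ^ 2 ≤ ∑' i : ι, ‖⟪w n, g i⟫‖ ^ 2 ∧
      ∑' i : ι, ‖⟪w n, g i⟫‖ ^ 2 ≤ B * ‖w n‖ ^ 2 := fun n => hframe (w n) (hw_mem n)
  have hsummable_i : ∀ n, Summable fun i : ι => ‖⟪w n, g i⟫‖ ^ 2 := by
    intro n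
    by_contra hns
    have h0 := tsum_eq_zero_of_not_summable hns
    have h1 := (hfr n).1
    rw [h0] at h1
    have hwn : w n = 0 := by
      have h2 : ‖w n‖ ^ 2 ≤ 0 := by nlinarith
      have h3 : ‖w n‖ = 0 := by nlinarith [norm_nonneg (w n)]
      simpa using h3
    apply hns
    have he : (fun i : ι => ‖⟪w n, g i⟫‖ ^ 2) = fun _ => (0 : ℝ) := by
      funext i; rw [hwn]; simp
    rw [he]
    exact summable_zero
  have hws : HasSum (fun n => ‖w n‖ ^ 2) (‖(f : H)‖ ^ 2) :=
    hasSum_wandering S hiso hpure (f : H)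
  set c : ℕ → ℝ := fun n => ∑' i : ι, ‖⟪w n, g i⟫‖ ^ 2 with hc
  have hc_nonneg : ∀ n, 0 ≤ c n := fun n => tsum_nonneg fun i => by positivity
  have hc_le : ∀ n, c n ≤ B * ‖w n‖ ^ 2 := fun n => (hfr n).2
  have hsum_c : Summable c :=
    Summable.of_nonneg_of_le hc_nonneg hc_le (hws.summable.mul_left B)
  set a' : ℕ × ι → ℝ := fun q => ‖⟪w q.1, g q.2⟫‖ ^ 2 with ha'
  have hsa' : Summable a' :=
    (summable_prod_of_nonneg fun q => by positivity).2
      ⟨fun n => hsummable_i n, by simpa using hsum_c⟩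
  have ht : ∀ p : ι × ℕ,
      ‖⟪f, (T ^ p.2) (P (g p.1))⟫‖ ^ 2 = a' (p.2, p.1) := by
    intro p
    rw [hmain p.2 p.1, hinner_w p.2 p.1]
  have htsum : (∑' p : ι × ℕ, ‖⟪f, (T ^ p.2) (P (g p.1))⟫‖ ^ 2) = ∑' n, c n := by
    have h1 : (∑' p : ι × ℕ, ‖⟪f, (T ^ p.2) (P (g p.1))⟫‖ ^ 2)
        = ∑' p : ι × ℕ, a' ((Equiv.prodComm ι ℕ) p) := by
      congr 1; funext p; exact ht p
    rw [h1, Equiv.tsum_eq (Equiv.prodComm ι ℕ) a']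
    exact Summable.tsum_prod' hsa' fun n => hsummable_i n
  have hnormf : ‖f‖ = ‖(f : H)‖ := (Submodule.coe_norm f).symm
  constructor
  · calc A * ‖f‖ ^ 2 = ∑' n, A * ‖w n‖ ^ 2 := by
          rw [tsum_mul_left, hws.tsum_eq, hnormf]
      _ ≤ ∑' n, c n :=
          Summable.tsum_le_tsum (fun n => (hfr n).1) (hws.summable.mul_left A) hsum_c
      _ = _ := htsum.symm
  · calc (∑' p : ι × ℕ, ‖⟪f, (T ^ p.2) (P (g p.1))⟫‖ ^ 2) = ∑' n, c n := htsum
      _ ≤ ∑' n, B * ‖w n‖ ^ 2 :=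
          Summable.tsum_le_tsum hc_le hsum_c (hws.summable.mul_left B)
      _ = B * ‖f‖ ^ 2 := by rw [tsum_mul_left, hws.tsum_eq, hnormf]
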